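/- Let q ≥ 2 be an integer and A ⊆ ℕ a set of indices with upper density limsup_{N→∞} #(A ∩ [0,N])/N = t. Then the set F = { Σ_{m=1}^∞ x_m q^{-m} : x_m ∈ {0,…,q−1}, and x_m = 0 if m ∉ A } is a compact subset of [0,1] whose packing dimension (and upper box dimension) equals t. -/

import Mathlib

open Filter Set Metric Bornology

set_option maxHeartbeats 1000000

/-- Minimal number of δ-balls needed to cover `E`. -/
noncomputable def coveringNumber {X : Type*} [PseudoMetricSpace X] (E : Set X) (δ : ℝ) : ℕ :=
  sInf {n : ℕ | ∃ s : Finset X, s.card = n ∧ E ⊆ ⋃ x ∈ s, Metric.ball x δ}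

/-- Upper box dimension: limsup of log N(E,δ) / (-log δ) as δ → 0⁺. -/
noncomputable def ubdim {X : Type*} [PseudoMetricSpace X] (E : Set X) : ℝ :=
  Filter.limsup (fun δ : ℝ => Real.log (coveringNumber E δ) / (-Real.log δ))
    (nhdsWithin 0 (Set.Ioi 0))

/-- Packing dimension via countable covers by bounded sets. -/
noncomputable def pdim {X : Type*} [PseudoMetricSpace X] (E : Set X) : ℝ :=
  sInf {a : ℝ | ∃ C : ℕ → Set X, (E ⊆ ⋃ i, C i) ∧ (∀ i, IsBounded (C i)) ∧
    ∀ i, ubdim (C i) ≤ a}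

/-- The set of numbers `∑ x_m q^{-m}` whose base-`q` digits are supported on `A`. -/
def digitSet (q : ℕ) (A : Set ℕ) : Set ℝ :=
  {x : ℝ | ∃ f : ℕ → ℕ, (∀ m, f m < q) ∧ (∀ m, m ∉ A → f m = 0) ∧
    x = ∑' m : ℕ, (f m : ℝ) / (q : ℝ) ^ (m + 1)}

/-! ### Generic covering number lemmas -/

noncomputable def gfun (E : Set ℝ) (δ : ℝ) : ℝ :=
  Real.log (coveringNumber E δ) / (-Real.log δ)

lemma ubdim_eq (E : Set ℝ) : ubdim E = Filter.limsup (gfun E) (nhdsWithin 0 (Set.Ioi 0)) := rfl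

lemma covN_le {E : Set ℝ} {δ : ℝ} {s : Finset ℝ} (h : E ⊆ ⋃ x ∈ s, ball x δ) :
    coveringNumber E δ ≤ s.card := Nat.sInf_le ⟨s, rfl, h⟩

lemma covN_exists {E : Set ℝ} {δ : ℝ} (h : ∃ s : Finset ℝ, E ⊆ ⋃ x ∈ s, ball x δ) :
    ∃ s : Finset ℝ, s.card = coveringNumber E δ ∧ E ⊆ ⋃ x ∈ s, ball x δ := by
  obtain ⟨s, hs⟩ := h
  have hne : {n : ℕ | ∃ s : Finset ℝ, s.card = n ∧ E ⊆ ⋃ x ∈ s, ball x δ}.Nonempty :=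
    ⟨s.card, s, rfl, hs⟩
  exact Nat.sInf_mem hne

lemma exists_cover_Icc (a b δ : ℝ) (hδ : 0 < δ) :
    ∃ s : Finset ℝ, s.card ≤ ⌊(b - a)/δ⌋₊ + 1 ∧ Icc a b ⊆ ⋃ x ∈ s, ball x δ := by
  refine ⟨(Finset.range (⌊(b - a)/δ⌋₊ + 1)).image (fun i : ℕ => a + δ * i), ?_, ?_⟩
  · exact Finset.card_image_le.trans (by simp)
  · intro x hx
    have hxa : 0 ≤ x - a := by linarith [hx.1]
    have hib : ⌊(x - a)/δ⌋₊ ≤ ⌊(b - a)/δ⌋₊ := by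
      apply Nat.floor_le_floor
      exact (div_le_div_iff_of_pos_right hδ).2 (by linarith [hx.2])
    set i := ⌊(x - a)/δ⌋₊ with hi
    refine mem_iUnion₂.2 ⟨a + δ * i, ?_, ?_⟩
    · exact Finset.mem_image.2 ⟨i, Finset.mem_range.2 (Nat.lt_succ_of_le hib), rfl⟩
    · rw [mem_ball, Real.dist_eq]
      have h1 : (i:ℝ) ≤ (x - a)/δ := Nat.floor_le (by positivity)
      have h2 : (x - a)/δ < i + 1 := Nat.lt_floor_add_one _
      have h1' : δ * i ≤ x - a := by
        have := mul_le_mul_of_nonneg_left h1 hδ.le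
        rwa [mul_div_cancel₀ _ hδ.ne'] at this
      have h2' : x - a < δ * (i + 1) := by
        have := mul_lt_mul_of_pos_left h2 hδ
        rwa [mul_div_cancel₀ _ hδ.ne'] at this
      rw [abs_lt]; constructor <;> nlinarith

lemma bounded_exists_cover {E : Set ℝ} (hE : IsBounded E) {δ : ℝ} (hδ : 0 < δ) :
    ∃ s : Finset ℝ, E ⊆ ⋃ x ∈ s, ball x δ := by
  obtain ⟨R, hR⟩ := hE.subset_closedBall 0
  obtain ⟨s, _, hs⟩ := exists_cover_Icc (-R) R δ hδ
  refine ⟨s, fun x hx => hs ?_⟩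
  have := hR hx
  rw [Real.closedBall_eq_Icc] at this
  constructor
  · linarith [this.1]
  · linarith [this.2]

lemma covN_le_Icc {E : Set ℝ} {a b δ : ℝ} (hδ : 0 < δ) (hE : E ⊆ Icc a b) :
    coveringNumber E δ ≤ ⌊(b - a)/δ⌋₊ + 1 := by
  obtain ⟨s, hcard, hs⟩ := exists_cover_Icc a b δ hδ
  exact (covN_le (hE.trans hs)).trans hcard

lemma covN_mono {E E' : Set ℝ} {δ : ℝ} (h : E ⊆ E') (hE' : IsBounded E') (hδ : 0 < δ) :
    coveringNumber E δ ≤ coveringNumber E' δ := by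
  obtain ⟨s, hcard, hs⟩ := covN_exists (bounded_exists_cover hE' hδ)
  exact (covN_le (h.trans hs)).trans_eq hcard

lemma le_covN_sep {E : Set ℝ} {δ : ℝ} (hδ : 0 < δ) (hE : IsBounded E) (S : Finset ℝ)
    (hS : ↑S ⊆ E) (hsep : ∀ x ∈ S, ∀ y ∈ S, x ≠ y → 2*δ ≤ |x - y|) :
    S.card ≤ coveringNumber E δ := by
  classical
  obtain ⟨s, hcard, hcov⟩ := covN_exists (bounded_exists_cover hE hδ)
  rw [← hcard]
  by_contra hlt
  push_neg at hlt
  set F : ℝ → ℝ := fun x => if h : ∃ c ∈ s, x ∈ ball c δ then h.choose else 0 with hF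
  have hFspec : ∀ x ∈ S, F x ∈ s ∧ x ∈ ball (F x) δ := by
    intro x hx
    have hex : ∃ c ∈ s, x ∈ ball c δ := by
      have := hcov (hS hx); simpa using this
    rw [hF]; simp only [dif_pos hex]
    exact ⟨hex.choose_spec.1, hex.choose_spec.2⟩
  obtain ⟨x, hx, y, hy, hxy, hFxy⟩ := Finset.exists_ne_map_eq_of_card_lt_of_maps_to hlt
    (fun x hx => (hFspec x hx).1)
  have h1 : |x - F x| < δ := by
    have := (hFspec x hx).2; rwa [mem_ball, Real.dist_eq] at this
  have h2 : |y - F y| < δ := by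
    have := (hFspec y hy).2; rwa [mem_ball, Real.dist_eq] at this
  rw [hFxy] at h1
  have habs : |x - y| ≤ |x - F y| + |F y - y| := abs_sub_le x (F y) y
  rw [abs_sub_comm (F y) y] at habs
  have := hsep x hx y hy hxy
  linarith

lemma log_natCast_nonneg (n : ℕ) : 0 ≤ Real.log n := by
  rcases Nat.eq_zero_or_pos n with h | h
  · simp [h]
  · exact Real.log_nonneg (by exact_mod_cast h)

lemma log_natCast_mono {a b : ℕ} (h : a ≤ b) : Real.log a ≤ Real.log b := by
  rcases Nat.eq_zero_or_pos a with h0 | h0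
  · simpa [h0] using log_natCast_nonneg b
  · exact Real.log_le_log (by exact_mod_cast h0) (by exact_mod_cast h)

lemma g_nonneg (E : Set ℝ) {δ : ℝ} (h1 : 0 < δ) (h2 : δ < 1) : 0 ≤ gfun E δ :=
  div_nonneg (log_natCast_nonneg _) (by simpa using (Real.log_neg h1 h2).le)

lemma eventually_g_nonneg (E : Set ℝ) : ∀ᶠ δ in nhdsWithin 0 (Set.Ioi 0), 0 ≤ gfun E δ := by
  filter_upwards [Ioo_mem_nhdsGT_of_mem (show (0:ℝ) ∈ Ico (0:ℝ) 1 from ⟨le_rfl, one_pos⟩)]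
    with δ hδ
  exact g_nonneg E hδ.1 hδ.2

lemma g_cobounded (E : Set ℝ) :
    Filter.IsCoboundedUnder (· ≤ ·) (nhdsWithin 0 (Set.Ioi 0)) (gfun E) :=
  Filter.IsCoboundedUnder.of_frequently_ge ((eventually_g_nonneg E).frequently)

lemma g_bddabove {E : Set ℝ} (hE : IsBounded E) :
    ∃ K : ℝ, ∀ᶠ δ in nhdsWithin 0 (Set.Ioi 0), gfun E δ ≤ K := by
  obtain ⟨R₀, hR⟩ := hE.subset_closedBall 0
  set R := max R₀ 1 with hRdef
  have hR1 : (1:ℝ) ≤ R := le_max_right _ _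
  have hER : E ⊆ Icc (-R) R := by
    intro x hx
    have h := hR hx
    rw [Real.closedBall_eq_Icc] at h
    exact ⟨by simp only [zero_sub] at h; linarith [h.1, le_max_left R₀ 1],
      by simp only [zero_add] at h; linarith [h.2, le_max_left R₀ 1]⟩
  refine ⟨Real.log (2*R+1) + 1, ?_⟩
  have hmem : Ioo (0:ℝ) (min 1 (Real.exp (-1))) ∈ nhdsWithin (0:ℝ) (Set.Ioi 0) :=
    Ioo_mem_nhdsGT_of_mem ⟨le_rfl, by positivity⟩
  filter_upwards [hmem] with δ hδ
  obtain ⟨hδ0, hδm⟩ := hδ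
  have hδ1 : δ < 1 := lt_of_lt_of_le hδm (min_le_left _ _)
  have hδe : δ < Real.exp (-1) := lt_of_lt_of_le hδm (min_le_right _ _)
  have hL : 1 ≤ -Real.log δ := by
    have := Real.log_lt_log hδ0 hδe
    rw [Real.log_exp] at this; linarith
  have hL0 : 0 < -Real.log δ := by linarith
  have hcov : coveringNumber E δ ≤ ⌊(R - (-R))/δ⌋₊ + 1 := covN_le_Icc hδ0 hER
  have hcast : ((coveringNumber E δ : ℕ) : ℝ) ≤ (2*R+1)/δ := by
    have h1 : ((⌊(R - (-R))/δ⌋₊ : ℕ) : ℝ) ≤ (R - (-R))/δ := Nat.floor_le (div_nonneg (by linarith) hδ0.le)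
    have h2 : ((coveringNumber E δ : ℕ) : ℝ) ≤ (⌊(R - (-R))/δ⌋₊ : ℝ) + 1 := by
      exact_mod_cast hcov
    have h3 : (R - (-R))/δ + 1 ≤ (2*R+1)/δ := by
      rw [div_add' _ _ _ hδ0.ne']
      have hnum : R - (-R) + 1*δ ≤ 2*R+1 := by nlinarith
      exact div_le_div_of_nonneg_right hnum hδ0.le
    linarith
  have hlog : Real.log (coveringNumber E δ) ≤ Real.log (2*R+1) + (-Real.log δ) := by
    have h4 : Real.log (coveringNumber E δ) ≤ Real.log ((2*R+1)/δ) := by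
      rcases Nat.eq_zero_or_pos (coveringNumber E δ) with h0 | h0
      · rw [h0]
        simp only [Nat.cast_zero, Real.log_zero]
        apply Real.log_nonneg
        rw [le_div_iff₀ hδ0]; nlinarith
      · exact Real.log_le_log (by exact_mod_cast h0) hcast
    rw [Real.log_div (ne_of_gt (by linarith)) hδ0.ne'] at h4
    linarith
  have hA : 0 ≤ Real.log (2*R+1) := Real.log_nonneg (by linarith)
  rw [gfun, div_le_iff₀ hL0]
  calc Real.log (coveringNumber E δ) ≤ Real.log (2*R+1) + (-Real.log δ) := hlog
  _ ≤ (Real.log (2*R+1) + 1) * (-Real.log δ) := by nlinarith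

lemma g_isBoundedUnder {E : Set ℝ} (hE : IsBounded E) :
    Filter.IsBoundedUnder (· ≤ ·) (nhdsWithin 0 (Set.Ioi 0)) (gfun E) := by
  obtain ⟨K, hK⟩ := g_bddabove hE
  exact ⟨K, by simpa [Filter.eventually_map] using hK⟩

lemma my_limsup_le {α : Type*} {l : Filter α} {u : α → ℝ} {t : ℝ}
    (hc : Filter.IsCoboundedUnder (· ≤ ·) l u) (h : ∀ ε > 0, ∀ᶠ x in l, u x ≤ t + ε) :
    Filter.limsup u l ≤ t :=
  le_of_forall_pos_le_add fun ε hε => Filter.limsup_le_of_le hc (h ε hε)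

lemma my_le_limsup {α : Type*} {l : Filter α} {u : α → ℝ} {t : ℝ}
    (hb : Filter.IsBoundedUnder (· ≤ ·) l u) (h : ∀ ε > 0, ∃ᶠ x in l, t - ε ≤ u x) :
    t ≤ Filter.limsup u l :=
  le_of_forall_pos_le_add fun ε hε => by
    have := Filter.le_limsup_of_frequently_le (h ε hε) hb; linarith

lemma ubdim_nonneg {E : Set ℝ} (hE : IsBounded E) : 0 ≤ ubdim E := by
  rw [ubdim_eq]
  exact Filter.le_limsup_of_frequently_le ((eventually_g_nonneg E).frequently)
    (g_isBoundedUnder hE)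

lemma ubdim_mono {E E' : Set ℝ} (h : E ⊆ E') (hE' : IsBounded E') : ubdim E ≤ ubdim E' := by
  rw [ubdim_eq, ubdim_eq]
  apply Filter.limsup_le_limsup _ (g_cobounded E) (g_isBoundedUnder hE')
  filter_upwards [Ioo_mem_nhdsGT_of_mem (show (0:ℝ) ∈ Ico (0:ℝ) 1 from ⟨le_rfl, one_pos⟩)]
    with δ hδ
  have hN : coveringNumber E δ ≤ coveringNumber E' δ := covN_mono h hE' hδ.1
  have hden : 0 < -Real.log δ := by simpa using Real.log_neg hδ.1 hδ.2
  exact div_le_div_of_nonneg_right (log_natCast_mono hN) hden.le |>.trans_eq rfl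

lemma ubdim_empty : ubdim (∅ : Set ℝ) = 0 := by
  have h : ∀ δ : ℝ, coveringNumber (∅ : Set ℝ) δ = 0 := by
    intro δ
    have h0 : (0:ℕ) ∈ {n : ℕ | ∃ s : Finset ℝ, s.card = n ∧ (∅ : Set ℝ) ⊆ ⋃ x ∈ s, ball x δ} :=
      ⟨∅, by simp⟩
    exact Nat.le_zero.1 (Nat.sInf_le h0)
  rw [ubdim_eq]
  have hg : gfun (∅ : Set ℝ) = fun _ => 0 := by
    funext δ; rw [gfun, h δ]; simp
  rw [hg]
  exact Filter.limsup_const 0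

lemma covN_closure {E : Set ℝ} (hE : IsBounded E) {δ : ℝ} (hδ : 0 < δ) :
    coveringNumber (closure E) δ ≤ coveringNumber E (δ/2) := by
  obtain ⟨s, hcard, hcov⟩ := covN_exists (bounded_exists_cover hE (half_pos hδ))
  have hclosed : IsClosed (⋃ x ∈ s, closedBall x (δ/2)) :=
    Set.Finite.isClosed_biUnion s.finite_toSet (fun i _ => Metric.isClosed_closedBall)
  have h1 : closure E ⊆ ⋃ x ∈ s, closedBall x (δ/2) :=
    closure_minimal (hcov.trans (iUnion₂_mono fun x _ => ball_subset_closedBall)) hclosed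
  have h2 : (⋃ x ∈ s, closedBall x (δ/2)) ⊆ ⋃ x ∈ s, ball x δ :=
    iUnion₂_mono fun x _ => closedBall_subset_ball (by linarith)
  exact (covN_le (h1.trans h2)).trans_eq hcard

lemma ubdim_closure_le {E : Set ℝ} (hE : IsBounded E) : ubdim (closure E) ≤ ubdim E := by
  set u := ubdim E with hu
  have hu0 : 0 ≤ u := ubdim_nonneg hE
  rw [ubdim_eq]
  apply my_limsup_le (g_cobounded _)
  intro ε hε
  have hb := g_isBoundedUnder hE
  have hlimeq : Filter.limsup (gfun E) (nhdsWithin 0 (Set.Ioi 0)) = u := (ubdim_eq E).symm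
  have h1 : ∀ᶠ δ in nhdsWithin (0:ℝ) (Set.Ioi 0), gfun E δ < u + ε/2 := by
    apply Filter.eventually_lt_of_limsup_lt _ hb
    rw [hlimeq]; linarith
  have htend : Tendsto (fun δ : ℝ => δ/2) (nhdsWithin (0:ℝ) (Set.Ioi 0))
      (nhdsWithin (0:ℝ) (Set.Ioi 0)) := by
    rw [tendsto_nhdsWithin_iff]
    constructor
    · have hc : Tendsto (fun δ : ℝ => δ/2) (nhds 0) (nhds 0) := by
        simpa using (continuous_id.div_const 2).tendsto (0:ℝ)
      exact hc.mono_left nhdsWithin_le_nhds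
    · filter_upwards [self_mem_nhdsWithin] with δ hδ
      exact half_pos (show (0:ℝ) < δ from hδ)
  have h2 : ∀ᶠ δ in nhdsWithin (0:ℝ) (Set.Ioi 0), gfun E (δ/2) < u + ε/2 := htend.eventually h1
  set M := max 1 ((u + ε/2) * Real.log 2 * 2 / ε) with hM
  have hM1 : (1:ℝ) ≤ M := le_max_left _ _
  have hMb : (u + ε/2) * Real.log 2 ≤ M * (ε/2) := by
    have h := le_max_right 1 ((u + ε/2) * Real.log 2 * 2 / ε)
    rw [div_le_iff₀ hε] at h
    nlinarith
  have h3 : ∀ᶠ δ in nhdsWithin (0:ℝ) (Set.Ioi 0), M ≤ -Real.log δ := by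
    have hlog : Tendsto (fun δ : ℝ => -Real.log δ) (nhdsWithin (0:ℝ) (Set.Ioi 0)) atTop :=
      tendsto_neg_atBot_atTop.comp Real.tendsto_log_nhdsGT_zero
    exact hlog.eventually_ge_atTop M
  filter_upwards [h2, h3,
    Ioo_mem_nhdsGT_of_mem (show (0:ℝ) ∈ Ico (0:ℝ) 1 from ⟨le_rfl, one_pos⟩)]
    with δ hg hM' hδm
  obtain ⟨hδ0, hδ1⟩ := hδm
  have hδ20 : 0 < δ/2 := half_pos hδ0
  have hδ21 : δ/2 < 1 := by linarith
  have hL0 : 0 < -Real.log δ := by linarith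
  have hL20 : 0 < -Real.log (δ/2) := by simpa using Real.log_neg hδ20 hδ21
  have hcovcl : coveringNumber (closure E) δ ≤ coveringNumber E (δ/2) := covN_closure hE hδ0
  have hnum : Real.log (coveringNumber E (δ/2)) ≤ (u + ε/2) * (-Real.log (δ/2)) := by
    rw [gfun, div_lt_iff₀ hL20] at hg
    linarith
  have hlog2 : -Real.log (δ/2) = -Real.log δ + Real.log 2 := by
    rw [Real.log_div hδ0.ne' (by norm_num)]; ring
  rw [gfun, div_le_iff₀ hL0]
  have hstep : (u + ε/2) * Real.log 2 ≤ (-Real.log δ) * (ε/2) := by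
    have : M * (ε/2) ≤ (-Real.log δ) * (ε/2) := by nlinarith
    linarith
  calc Real.log (coveringNumber (closure E) δ)
      ≤ Real.log (coveringNumber E (δ/2)) := log_natCast_mono hcovcl
    _ ≤ (u + ε/2) * (-Real.log δ + Real.log 2) := by rw [← hlog2]; exact hnum
    _ ≤ (u + ε) * (-Real.log δ) := by nlinarith

/-! ### Digit expansions -/

noncomputable def Phi (q : ℕ) (f : ℕ → ℕ) : ℝ := ∑' m : ℕ, (f m : ℝ) / (q : ℝ) ^ (m + 1)

def Cyl (q : ℕ) (A : Set ℕ) (f : ℕ → ℕ) (k : ℕ) : Set ℝ :=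
  {x : ℝ | ∃ g : ℕ → ℕ, (∀ m, g m < q) ∧ (∀ m, m ∉ A → g m = 0) ∧
    (∀ m, m < k → g m = f m) ∧ x = Phi q g}

lemma digitSet_eq_cyl (q : ℕ) (A : Set ℕ) (f : ℕ → ℕ) : digitSet q A = Cyl q A f 0 := by
  ext x
  constructor
  · rintro ⟨g, h1, h2, h3⟩
    exact ⟨g, h1, fun m hm => h2 m hm, fun m hm => absurd hm (Nat.not_lt_zero m), h3⟩
  · rintro ⟨g, h1, h2, _, h3⟩
    exact ⟨g, h1, h2, h3⟩

section digits

variable {q : ℕ}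

lemma term_le (hq : 2 ≤ q) (m : ℕ) {j : ℕ} (hj : j ≤ q) :
    (j:ℝ)/(q:ℝ)^(m+1) ≤ ((q:ℝ)⁻¹)^m := by
  have hQ0 : (0:ℝ) < q := by positivity
  have h1 : (j:ℝ)/(q:ℝ)^(m+1) ≤ (q:ℝ)/(q:ℝ)^(m+1) := by
    have hjq : (j:ℝ) ≤ (q:ℝ) := by exact_mod_cast hj
    gcongr
  have h2 : (q:ℝ)/(q:ℝ)^(m+1) = ((q:ℝ)⁻¹)^m := by
    rw [div_eq_iff (by positivity : ((q:ℝ)^(m+1)) ≠ 0), inv_pow, pow_succ,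
      ← mul_assoc, inv_mul_cancel₀ (by positivity : ((q:ℝ)^m) ≠ 0), one_mul]
  rw [← h2]; exact h1

lemma summable_digits (hq : 2 ≤ q) {f : ℕ → ℕ} (hf : ∀ m, f m < q) :
    Summable (fun m : ℕ => (f m : ℝ) / (q : ℝ) ^ (m + 1)) := by
  have hQ1 : (1:ℝ) < q := by exact_mod_cast hq
  apply Summable.of_nonneg_of_le (fun m => by positivity)
    (fun m => term_le hq m (hf m).le)
    (summable_geometric_of_lt_one (r := (q:ℝ)⁻¹) (by positivity) (inv_lt_one_of_one_lt₀ hQ1))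

lemma phi_nonneg (q : ℕ) (f : ℕ → ℕ) : 0 ≤ Phi q f := by
  unfold Phi
  exact tsum_nonneg fun m => by positivity

lemma tail_le (hq : 2 ≤ q) {f : ℕ → ℕ} (hf : ∀ m, f m < q) (n : ℕ) :
    ∑' m : ℕ, (f (m + n) : ℝ) / (q : ℝ) ^ ((m + n) + 1) ≤ ((q:ℝ)⁻¹)^n := by
  have hQ0 : (0:ℝ) < q := by positivity
  have hQ1 : (1:ℝ) < q := by exact_mod_cast hq
  have hr0 : (0:ℝ) ≤ (q:ℝ)⁻¹ := by positivity
  have hr1 : (q:ℝ)⁻¹ < 1 := inv_lt_one_of_one_lt₀ hQ1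
  have hsumL : Summable (fun m : ℕ => (f (m + n) : ℝ) / (q : ℝ) ^ ((m + n) + 1)) := by
    exact (summable_nat_add_iff n).2 (summable_digits hq hf)
  have hsumR : Summable (fun m : ℕ => ((q:ℝ) - 1) * ((q:ℝ)⁻¹)^(n+1) * ((q:ℝ)⁻¹)^m) :=
    (summable_geometric_of_lt_one hr0 hr1).mul_left _
  have hbound : ∀ m : ℕ, (f (m + n) : ℝ) / (q : ℝ) ^ ((m + n) + 1)
      ≤ ((q:ℝ) - 1) * ((q:ℝ)⁻¹)^(n+1) * ((q:ℝ)⁻¹)^m := by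
    intro m
    have hfle : (f (m + n) : ℝ) ≤ (q:ℝ) - 1 := by
      have : (f (m + n) : ℝ) + 1 ≤ (q:ℝ) := by exact_mod_cast hf (m + n)
      linarith
    have hpow : ((q:ℝ)⁻¹)^(n+1) * ((q:ℝ)⁻¹)^m = ((q:ℝ)^((m+n)+1))⁻¹ := by
      rw [← pow_add, ← inv_pow]
      congr 1
      omega
    rw [div_eq_mul_inv, mul_assoc, hpow]
    apply mul_le_mul_of_nonneg_right hfle (by positivity)
  calc ∑' m : ℕ, (f (m + n) : ℝ) / (q : ℝ) ^ ((m + n) + 1)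
      ≤ ∑' m : ℕ, ((q:ℝ) - 1) * ((q:ℝ)⁻¹)^(n+1) * ((q:ℝ)⁻¹)^m :=
        Summable.tsum_le_tsum hbound hsumL hsumR
    _ = ((q:ℝ) - 1) * ((q:ℝ)⁻¹)^(n+1) * (1 - (q:ℝ)⁻¹)⁻¹ := by
        rw [tsum_mul_left, tsum_geometric_of_lt_one hr0 hr1]
    _ = ((q:ℝ)⁻¹)^n := by
        have hne : (q:ℝ) ≠ 0 := hQ0.ne'
        have hne1 : (q:ℝ) - 1 ≠ 0 := by linarith
        have h1 : (1 - (q:ℝ)⁻¹) = ((q:ℝ)-1)/q := by field_simp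
        rw [pow_succ, h1, inv_div]
        calc ((q:ℝ) - 1) * (((q:ℝ)⁻¹)^n * (q:ℝ)⁻¹) * ((q:ℝ)/((q:ℝ)-1))
            = ((q:ℝ)⁻¹)^n * ((q:ℝ)⁻¹ * (q:ℝ)) * (((q:ℝ)-1)/((q:ℝ)-1)) := by ring
          _ = ((q:ℝ)⁻¹)^n := by rw [inv_mul_cancel₀ hne, div_self hne1, mul_one, mul_one]

lemma phi_split (hq : 2 ≤ q) {f : ℕ → ℕ} (hf : ∀ m, f m < q) (n : ℕ) :
    Phi q f = (∑ m ∈ Finset.range n, (f m : ℝ)/(q:ℝ)^(m+1))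
      + ∑' m : ℕ, (f (m + n) : ℝ)/(q:ℝ)^((m + n)+1) :=
  (Summable.sum_add_tsum_nat_add n (summable_digits hq hf)).symm

lemma phi_approx (hq : 2 ≤ q) {f g : ℕ → ℕ} {n : ℕ} (hf : ∀ m, f m < q) (hg : ∀ m, g m < q)
    (hagree : ∀ m, m < n → f m = g m) (hgz : ∀ m, n ≤ m → g m = 0) :
    0 ≤ Phi q f - Phi q g ∧ Phi q f - Phi q g ≤ ((q:ℝ)⁻¹)^n := by
  rw [phi_split hq hf n, phi_split hq hg n]
  have hpre : (∑ m ∈ Finset.range n, (f m : ℝ)/(q:ℝ)^(m+1))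
      = ∑ m ∈ Finset.range n, (g m : ℝ)/(q:ℝ)^(m+1) :=
    Finset.sum_congr rfl fun m hm => by rw [hagree m (Finset.mem_range.1 hm)]
  have htg : ∑' m : ℕ, (g (m + n) : ℝ)/(q:ℝ)^((m + n)+1) = 0 := by
    have hz : ∀ m : ℕ, (g (m + n) : ℝ)/(q:ℝ)^((m + n)+1) = 0 := by
      intro m; rw [hgz (m + n) (Nat.le_add_left n m)]; simp
    rw [tsum_congr hz, tsum_zero]
  have htf0 : 0 ≤ ∑' m : ℕ, (f (m + n) : ℝ)/(q:ℝ)^((m + n)+1) :=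
    tsum_nonneg fun m => by positivity
  have htf1 := tail_le hq hf n
  rw [hpre, htg]
  constructor
  · linarith
  · linarith

lemma phi_le_one (hq : 2 ≤ q) {f : ℕ → ℕ} (hf : ∀ m, f m < q) : Phi q f ≤ 1 := by
  have hz : ∀ m : ℕ, (fun _ : ℕ => 0) m < q := fun m => lt_of_lt_of_le (by norm_num) hq
  have h := phi_approx hq (n := 0) hf hz (fun m hm => absurd hm (Nat.not_lt_zero m))
    (fun m _ => rfl)
  have hP0 : Phi q (fun _ : ℕ => 0) = 0 := by
    rw [Phi]; simp
  rw [hP0, pow_zero] at h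
  linarith [h.2]

lemma phi_prefix_close (hq : 2 ≤ q) {f g : ℕ → ℕ} {k : ℕ} (hf : ∀ m, f m < q)
    (hg : ∀ m, g m < q) (hagree : ∀ m, m < k → f m = g m) :
    |Phi q f - Phi q g| ≤ 2 * ((q:ℝ)⁻¹)^k := by
  rw [phi_split hq hf k, phi_split hq hg k]
  have hpre : (∑ m ∈ Finset.range k, (f m : ℝ)/(q:ℝ)^(m+1))
      = ∑ m ∈ Finset.range k, (g m : ℝ)/(q:ℝ)^(m+1) :=
    Finset.sum_congr rfl fun m hm => by rw [hagree m (Finset.mem_range.1 hm)]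
  have h1 : 0 ≤ ∑' m : ℕ, (f (m + k) : ℝ)/(q:ℝ)^((m + k)+1) := tsum_nonneg fun m => by positivity
  have h2 : 0 ≤ ∑' m : ℕ, (g (m + k) : ℝ)/(q:ℝ)^((m + k)+1) := tsum_nonneg fun m => by positivity
  have h3 := tail_le hq hf k
  have h4 := tail_le hq hg k
  have hr : (0:ℝ) ≤ ((q:ℝ)⁻¹)^k := by positivity
  rw [hpre, abs_le]
  constructor
  · linarith
  · linarith

lemma digits_inj (hq : 2 ≤ q) : ∀ (n : ℕ) (u v : ℕ → ℕ), (∀ m, m < n → u m < q) →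
    (∀ m, m < n → v m < q) →
    (∑ m ∈ Finset.range n, u m * q ^ m) = (∑ m ∈ Finset.range n, v m * q ^ m) →
    ∀ m, m < n → u m = v m := by
  intro n
  induction n with
  | zero => intro u v _ _ _ m hm; omega
  | succ n ih =>
    intro u v hu hv hsum m hm
    have e : ∀ w : ℕ → ℕ, ∑ i ∈ Finset.range (n+1), w i * q^i
        = q * (∑ i ∈ Finset.range n, w (i+1) * q^i) + w 0 := by
      intro w
      rw [Finset.sum_range_succ', pow_zero, mul_one, Finset.mul_sum]
      congr 1
      apply Finset.sum_congr rfl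
      intro i _
      ring
    rw [e u, e v] at hsum
    have hu0 : u 0 < q := hu 0 (Nat.succ_pos n)
    have hv0 : v 0 < q := hv 0 (Nat.succ_pos n)
    have h0 : u 0 = v 0 := by
      have h1 := congrArg (· % q) hsum
      simpa [Nat.mul_add_mod, Nat.mod_eq_of_lt hu0, Nat.mod_eq_of_lt hv0] using h1
    have hrest : (∑ i ∈ Finset.range n, u (i+1) * q^i) = ∑ i ∈ Finset.range n, v (i+1) * q^i := by
      rw [h0] at hsum
      have h2 := Nat.add_right_cancel hsum
      exact Nat.eq_of_mul_eq_mul_left (by omega) h2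
    rcases Nat.eq_zero_or_pos m with rfl | hmpos
    · exact h0
    · have := ih (fun i => u (i+1)) (fun i => v (i+1)) (fun i hi => hu (i+1) (by omega))
        (fun i hi => hv (i+1) (by omega)) hrest (m-1) (by omega)
      simpa [Nat.sub_add_cancel hmpos] using this

lemma phi_sep (hq : 2 ≤ q) {n : ℕ} {u v : ℕ → ℕ} (hu : ∀ m, u m < q) (hv : ∀ m, v m < q)
    (hun : ∀ m, n ≤ m → u m = 0) (hvn : ∀ m, n ≤ m → v m = 0)
    (hne : ∃ m, m < n ∧ u m ≠ v m) :
    ((q:ℝ)⁻¹)^n ≤ |Phi q u - Phi q v| := by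
  classical
  have hQ0 : (0:ℝ) < q := by positivity
  have hPu : Phi q u = ∑ m ∈ Finset.range n, (u m:ℝ)/(q:ℝ)^(m+1) := by
    rw [Phi]
    apply tsum_eq_sum
    intro b hb
    rw [hun b (by simpa using hb)]; simp
  have hPv : Phi q v = ∑ m ∈ Finset.range n, (v m:ℝ)/(q:ℝ)^(m+1) := by
    rw [Phi]
    apply tsum_eq_sum
    intro b hb
    rw [hvn b (by simpa using hb)]; simp
  set Nu := ∑ m ∈ Finset.range n, u m * q^(n-1-m) with hNu
  set Nv := ∑ m ∈ Finset.range n, v m * q^(n-1-m) with hNv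
  have key : ∀ w : ℕ → ℕ, (q:ℝ)^n * (∑ m ∈ Finset.range n, (w m:ℝ)/(q:ℝ)^(m+1))
      = ((∑ m ∈ Finset.range n, w m * q^(n-1-m) : ℕ) : ℝ) := by
    intro w
    push_cast
    rw [Finset.mul_sum]
    apply Finset.sum_congr rfl
    intro m hm
    have hmn : m < n := Finset.mem_range.1 hm
    have hpow : (q:ℝ)^n = (q:ℝ)^(m+1) * (q:ℝ)^(n-1-m) := by
      rw [← pow_add]; congr 1; omega
    rw [hpow]
    have hne0 : (q:ℝ)^(m+1) ≠ 0 := by positivity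
    field_simp
  have hNuNv : Nu ≠ Nv := by
    intro hEq
    have hreflect : ∀ w : ℕ → ℕ, (∑ m ∈ Finset.range n, w m * q^(n-1-m))
        = ∑ j ∈ Finset.range n, w (n-1-j) * q^j := by
      intro w
      rw [← Finset.sum_range_reflect]
      apply Finset.sum_congr rfl
      intro j hj
      have hjn : j < n := Finset.mem_range.1 hj
      have hj' : n - 1 - (n - 1 - j) = j := by omega
      rw [hj']
    rw [hNu, hreflect u] at hEq
    rw [hNv, hreflect v] at hEq
    obtain ⟨m, hmn, hmne⟩ := hne
    have := digits_inj hq n (fun j => u (n-1-j)) (fun j => v (n-1-j))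
      (fun j _ => hu _) (fun j _ => hv _) hEq (n-1-m) (by omega)
    have hmm : n-1-(n-1-m) = m := by omega
    rw [hmm] at this
    exact hmne this
  have habs : (1:ℝ) ≤ |(Nu:ℝ) - (Nv:ℝ)| := by
    have hz : (Nu:ℤ) - (Nv:ℤ) ≠ 0 := sub_ne_zero.2 (by exact_mod_cast hNuNv)
    have h1 : (1:ℤ) ≤ |(Nu:ℤ) - (Nv:ℤ)| := Int.one_le_abs hz
    have h2 : (1:ℝ) ≤ |((Nu:ℤ) - (Nv:ℤ) : ℤ)| := by exact_mod_cast h1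
    push_cast at h2
    exact h2
  have hdiff : (q:ℝ)^n * (Phi q u - Phi q v) = (Nu:ℝ) - (Nv:ℝ) := by
    rw [hPu, hPv, mul_sub, key u, key v]
  have hqn : (0:ℝ) < (q:ℝ)^n := by positivity
  have heq : |Phi q u - Phi q v| = |(Nu:ℝ) - (Nv:ℝ)| / (q:ℝ)^n := by
    rw [← hdiff, abs_mul, abs_of_pos hqn]
    field_simp
  rw [heq, inv_pow, inv_eq_one_div]
  gcongr

lemma cyl_subset_digitSet {A : Set ℕ} {f : ℕ → ℕ} {k : ℕ} :
    Cyl q A f k ⊆ digitSet q A := by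
  rintro x ⟨g, h1, h2, _, h4⟩
  exact ⟨g, h1, h2, h4⟩

lemma digitSet_subset_Icc (hq : 2 ≤ q) (A : Set ℕ) : digitSet q A ⊆ Icc (0:ℝ) 1 := by
  rintro x ⟨f, h1, _, rfl⟩
  exact ⟨phi_nonneg q f, phi_le_one hq h1⟩

lemma cyl_struct (hq : 2 ≤ q) (A : Set ℕ) (f : ℕ → ℕ) (hf1 : ∀ m, f m < q)
    (hf2 : ∀ m, m ∉ A → f m = 0) (k n : ℕ) (hkn : k ≤ n) :
    ∃ S : Finset ℝ, (↑S : Set ℝ) ⊆ Cyl q A f k ∧ S.card = q ^ (A ∩ Set.Ico k n).ncard ∧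
      (∀ x ∈ S, ∀ y ∈ S, x ≠ y → ((q:ℝ)⁻¹)^n ≤ |x - y|) ∧
      (∀ y ∈ Cyl q A f k, ∃ x ∈ S, |y - x| ≤ ((q:ℝ)⁻¹)^n) := by
  classical
  have hT : (A ∩ Set.Ico k n).Finite := (Set.finite_Ico k n).inter_of_right A
  set T : Finset ℕ := hT.toFinset with hTdef
  have hmemT : ∀ m : ℕ, m ∈ T ↔ m ∈ A ∧ k ≤ m ∧ m < n := by
    intro m
    rw [hTdef, Set.Finite.mem_toFinset]
    simp [Set.mem_Ico]
  set G : (↥T → Fin q) → ℕ → ℕ :=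
    fun v m => if hm : m ∈ T then (v ⟨m, hm⟩ : ℕ) else if m < k then f m else 0 with hG
  have hG1 : ∀ v m, G v m < q := by
    intro v m
    rw [hG]
    by_cases hm : m ∈ T
    · simp only [dif_pos hm]; exact (v ⟨m, hm⟩).is_lt
    · simp only [dif_neg hm]
      by_cases hmk : m < k
      · simp only [if_pos hmk]; exact hf1 m
      · simp only [if_neg hmk]; omega
  have hG2 : ∀ v m, m ∉ A → G v m = 0 := by
    intro v m hm
    rw [hG]
    have hmT : m ∉ T := fun h => hm ((hmemT m).1 h).1
    simp only [dif_neg hmT]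
    by_cases hmk : m < k
    · simp only [if_pos hmk]; exact hf2 m hm
    · simp only [if_neg hmk]
  have hG3 : ∀ v m, m < k → G v m = f m := by
    intro v m hmk
    rw [hG]
    have hmT : m ∉ T := fun h => by have := (hmemT m).1 h; omega
    simp only [dif_neg hmT, if_pos hmk]
  have hG4 : ∀ v m, n ≤ m → G v m = 0 := by
    intro v m hmn
    rw [hG]
    have hmT : m ∉ T := fun h => by have := (hmemT m).1 h; omega
    have hmk : ¬ m < k := by omega
    simp only [dif_neg hmT, if_neg hmk]
  set P : (↥T → Fin q) → ℝ := fun v => Phi q (G v) with hP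
  have hGC : ∀ v, P v ∈ Cyl q A f k := fun v => ⟨G v, hG1 v, hG2 v, hG3 v, rfl⟩
  have hsep' : ∀ v w, (∃ m, m < n ∧ G v m ≠ G w m) → ((q:ℝ)⁻¹)^n ≤ |P v - P w| :=
    fun v w h => phi_sep hq (hG1 v) (hG1 w) (hG4 v) (hG4 w) h
  have hdiffer : ∀ v w, v ≠ w → ∃ m, m < n ∧ G v m ≠ G w m := by
    intro v w hvw
    obtain ⟨⟨m, hm⟩, hne⟩ := Function.ne_iff.1 hvw
    refine ⟨m, ((hmemT m).1 hm).2.2, ?_⟩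
    rw [hG]
    simp only [dif_pos hm]
    intro hc
    exact hne (Fin.val_injective hc)
  have hPinj : Function.Injective P := by
    intro v w hvw
    by_contra hne
    obtain ⟨m, hmn, hGm⟩ := hdiffer v w hne
    have hs := hsep' v w ⟨m, hmn, hGm⟩
    rw [hvw, sub_self, abs_zero] at hs
    have hpos : (0:ℝ) < ((q:ℝ)⁻¹)^n := by positivity
    linarith
  refine ⟨Finset.univ.image P, ?_, ?_, ?_, ?_⟩
  · intro x hx
    simp only [Finset.coe_image, Finset.coe_univ, Set.image_univ, Set.mem_range] at hx
    obtain ⟨v, rfl⟩ := hx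
    exact hGC v
  · rw [Finset.card_image_of_injective _ hPinj, Finset.card_univ, Fintype.card_fun,
      Fintype.card_fin, Fintype.card_coe]
    congr 1
    rw [hTdef]
    exact (Set.ncard_eq_toFinset_card _ hT).symm
  · intro x hx y hy hxy
    obtain ⟨v, _, rfl⟩ := Finset.mem_image.1 hx
    obtain ⟨w, _, rfl⟩ := Finset.mem_image.1 hy
    apply hsep'
    by_contra hc
    push_neg at hc
    have : G v = G w := by
      funext m
      by_cases hmn : m < n
      · exact hc m hmn
      · rw [hG4 v m (by omega), hG4 w m (by omega)]
    exact hxy (by rw [hP]; simp only [this])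
  · rintro y ⟨g, hg1, hg2, hg3, rfl⟩
    set v : ↥T → Fin q := fun m => ⟨g m.1, hg1 m.1⟩ with hv
    refine ⟨P v, Finset.mem_image.2 ⟨v, Finset.mem_univ v, rfl⟩, ?_⟩
    have hagree : ∀ m, m < n → g m = G v m := by
      intro m hmn
      rw [hG]
      by_cases hm : m ∈ T
      · simp only [dif_pos hm]; rfl
      · simp only [dif_neg hm]
        by_cases hmk : m < k
        · simp only [if_pos hmk]; exact hg3 m hmk
        · simp only [if_neg hmk]
          have hmA : m ∉ A := by
            intro hA
            exact hm ((hmemT m).2 ⟨hA, by omega, hmn⟩)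
          exact hg2 m hmA
    have hb := phi_approx hq (n := n) hg1 (hG1 v) hagree (hG4 v)
    rw [abs_of_nonneg hb.1]
    exact hb.2

lemma covN_cyl_le (hq : 2 ≤ q) (A : Set ℕ) (f : ℕ → ℕ) (hf1 : ∀ m, f m < q)
    (hf2 : ∀ m, m ∉ A → f m = 0) {k n : ℕ} (hkn : k ≤ n) {δ : ℝ}
    (hδ : ((q:ℝ)⁻¹)^n < δ) :
    coveringNumber (Cyl q A f k) δ ≤ q ^ (A ∩ Set.Ico k n).ncard := by
  obtain ⟨S, hSsub, hScard, _, hSapprox⟩ := cyl_struct hq A f hf1 hf2 k n hkn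
  have hcover : Cyl q A f k ⊆ ⋃ x ∈ S, ball x δ := by
    intro y hy
    obtain ⟨x, hxS, hxy⟩ := hSapprox y hy
    exact mem_iUnion₂.2 ⟨x, hxS, by rw [mem_ball, Real.dist_eq]; linarith⟩
  exact (covN_le hcover).trans_eq hScard

lemma le_covN_cyl (hq : 2 ≤ q) (A : Set ℕ) (f : ℕ → ℕ) (hf1 : ∀ m, f m < q)
    (hf2 : ∀ m, m ∉ A → f m = 0) {k n : ℕ} (hkn : k ≤ n) :
    q ^ (A ∩ Set.Ico k n).ncard ≤ coveringNumber (Cyl q A f k) (((q:ℝ)⁻¹)^n / 2) := by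
  obtain ⟨S, hSsub, hScard, hSsep, _⟩ := cyl_struct hq A f hf1 hf2 k n hkn
  have hbd : IsBounded (Cyl q A f k) :=
    (isBounded_Icc (0:ℝ) 1).subset ((cyl_subset_digitSet).trans (digitSet_subset_Icc hq A))
  rw [← hScard]
  apply le_covN_sep (by positivity) hbd S hSsub
  intro x hx y hy hxy
  have := hSsep x hx y hy hxy
  linarith

lemma isCompact_digitSet (hq : 2 ≤ q) (A : Set ℕ) : IsCompact (digitSet q A) := by
  have hqpos : 0 < q := by omega
  have hQ1 : (1:ℝ) < q := by exact_mod_cast hq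
  set Z : Fin q := ⟨0, hqpos⟩ with hZ
  set K : Set (ℕ → Fin q) := {v | ∀ m, m ∉ A → v m = Z} with hK
  have hKc : IsClosed K := by
    have hKi : K = ⋂ m, {v : ℕ → Fin q | m ∉ A → v m = Z} := by
      ext v; simp [hK, Set.mem_iInter]
    rw [hKi]
    apply isClosed_iInter
    intro m
    by_cases hm : m ∈ A
    · have : {v : ℕ → Fin q | m ∉ A → v m = Z} = Set.univ := by
        ext v; simp [hm]
      rw [this]; exact isClosed_univ
    · have : {v : ℕ → Fin q | m ∉ A → v m = Z} = (fun v : ℕ → Fin q => v m) ⁻¹' {Z} := by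
        ext v; simp [hm]
      rw [this]
      exact isClosed_singleton.preimage (continuous_apply m)
  have hKcompact : IsCompact K := hKc.isCompact
  set Ψ : (ℕ → Fin q) → ℝ := fun v => ∑' m : ℕ, ((v m : ℕ) : ℝ) / (q:ℝ)^(m+1) with hΨdef
  have hΨ : Continuous Ψ := by
    apply continuous_tsum (u := fun m : ℕ => ((q:ℝ)⁻¹)^m)
    · intro m
      exact Continuous.comp
        (continuous_of_discreteTopology
          (f := fun x : Fin q => ((x : ℕ) : ℝ) / (q:ℝ)^(m+1)))
        (continuous_apply m)
    · exact summable_geometric_of_lt_one (by positivity) (inv_lt_one_of_one_lt₀ hQ1)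
    · intro m v
      rw [Real.norm_eq_abs, abs_of_nonneg (by positivity)]
      exact term_le hq m (v m).is_lt.le
  have himg : digitSet q A = Ψ '' K := by
    ext x
    constructor
    · rintro ⟨f, h1, h2, rfl⟩
      refine ⟨fun m => ⟨f m, h1 m⟩, fun m hm => ?_, rfl⟩
      rw [hZ]
      exact Fin.ext (by simp [h2 m hm])
    · rintro ⟨v, hv, rfl⟩
      refine ⟨fun m => (v m : ℕ), fun m => (v m).is_lt, fun m hm => ?_, rfl⟩
      simp [hv m hm, hZ]
  rw [himg]
  exact hKcompact.image hΨ

/-! ### The main dimension bounds -/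

lemma ubdim_cyl_ge (hq : 2 ≤ q) (A : Set ℕ) (f : ℕ → ℕ) (hf1 : ∀ m, f m < q)
    (hf2 : ∀ m, m ∉ A → f m = 0) (k : ℕ) {t : ℝ} (ht2 : t ≤ 2)
    (F2 : ∀ ε > 0, ∃ᶠ n in atTop, (t - ε) * n ≤ ((A ∩ Set.Ico 0 n).ncard : ℝ)) :
    t ≤ ubdim (Cyl q A f k) := by
  have hQ1 : (1:ℝ) < q := by exact_mod_cast hq
  have hr0 : (0:ℝ) < (q:ℝ)⁻¹ := by positivity
  have hr1 : (q:ℝ)⁻¹ < 1 := inv_lt_one_of_one_lt₀ hQ1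
  have hbd : IsBounded (Cyl q A f k) :=
    (isBounded_Icc (0:ℝ) 1).subset ((cyl_subset_digitSet).trans (digitSet_subset_Icc hq A))
  have hlq : 0 < Real.log q := Real.log_pos hQ1
  have hl2 : 0 < Real.log 2 := Real.log_pos one_lt_two
  have hl2q : Real.log 2 ≤ Real.log q := Real.log_le_log two_pos (by exact_mod_cast hq)
  rw [ubdim_eq]
  apply my_le_limsup (g_isBoundedUnder hbd)
  intro ε hε
  set n₁ : ℕ := max (k+1) (⌈2*((k:ℝ)+2)/ε⌉₊ + 1) with hn₁
  have freq := (F2 (ε/2) (half_pos hε)).and_eventually (eventually_ge_atTop n₁)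
  have htends : Tendsto (fun n : ℕ => ((q:ℝ)⁻¹)^n / 2) atTop
      (nhdsWithin (0:ℝ) (Set.Ioi 0)) := by
    rw [tendsto_nhdsWithin_iff]
    constructor
    · have h := tendsto_pow_atTop_nhds_zero_of_lt_one hr0.le hr1
      simpa using h.div_const 2
    · exact Eventually.of_forall fun n => Set.mem_Ioi.2 (by positivity)
  apply htends.frequently
  apply freq.mono
  rintro n ⟨hcn, hn1⟩
  have hkn : k + 1 ≤ n := le_trans (le_max_left _ _) hn1
  have hnceil : (⌈2*((k:ℝ)+2)/ε⌉₊ + 1 : ℕ) ≤ n := le_trans (le_max_right _ _) hn1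
  have hnbig : 2*((k:ℝ)+2)/ε < n := by
    have h1 : 2*((k:ℝ)+2)/ε ≤ (⌈2*((k:ℝ)+2)/ε⌉₊ : ℝ) := Nat.le_ceil _
    have h2 : ((⌈2*((k:ℝ)+2)/ε⌉₊ : ℕ) : ℝ) + 1 ≤ (n:ℝ) := by exact_mod_cast hnceil
    linarith
  have hεn : 2*((k:ℝ)+2) < ε * n := by
    rw [div_lt_iff₀ hε] at hnbig
    linarith
  -- covering number lower bound
  have hcovge := le_covN_cyl hq A f hf1 hf2 (k := k) (n := n) (by omega)
  set ckn := (A ∩ Set.Ico k n).ncard with hckn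
  -- counting inequality
  have hsubset : A ∩ Set.Ico 0 n ⊆ (A ∩ Set.Ico k n) ∪ Set.Ico 0 k := by
    rintro x ⟨hxA, _, hxn⟩
    by_cases hxk : x < k
    · exact Or.inr ⟨Nat.zero_le x, hxk⟩
    · exact Or.inl ⟨hxA, by omega, hxn⟩
  have hcount : (A ∩ Set.Ico 0 n).ncard ≤ ckn + k := by
    have h1 := Set.ncard_le_ncard hsubset
      (((Set.finite_Ico k n).inter_of_right A).union (Set.finite_Ico 0 k))
    have h2 := Set.ncard_union_le (A ∩ Set.Ico k n) (Set.Ico 0 k)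
    have h3 : (Set.Ico (0:ℕ) k).ncard = k := by
      rw [← Finset.coe_Ico, Set.ncard_coe_finset, Nat.card_Ico]
      omega
    omega
  -- now the computation
  set δn : ℝ := ((q:ℝ)⁻¹)^n / 2 with hδn
  have hlogδ : -Real.log δn = n * Real.log q + Real.log 2 := by
    rw [hδn, Real.log_div (by positivity) (by norm_num), Real.log_pow, Real.log_inv]
    ring
  have hden : (0:ℝ) < n * Real.log q + Real.log 2 := by
    have : (0:ℝ) ≤ n * Real.log q := by positivity
    linarith
  have hnum : (ckn : ℝ) * Real.log q ≤ Real.log (coveringNumber (Cyl q A f k) δn) := by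
    have h1 : Real.log ((q ^ ckn : ℕ) : ℝ) ≤ Real.log (coveringNumber (Cyl q A f k) δn) :=
      log_natCast_mono hcovge
    rwa [Nat.cast_pow, Real.log_pow] at h1
  have hckn_ge : (t - ε/2) * n - k ≤ (ckn : ℝ) := by
    have h1 : ((A ∩ Set.Ico 0 n).ncard : ℝ) ≤ (ckn : ℝ) + k := by exact_mod_cast hcount
    linarith
  have harith : (t - ε) * (n * Real.log q + Real.log 2) ≤ (ckn : ℝ) * Real.log q := by
    rcases le_or_gt (t - ε) 0 with hh | hh
    · have hL : (t - ε) * (n * Real.log q + Real.log 2) ≤ 0 :=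
        mul_nonpos_of_nonpos_of_nonneg hh hden.le
      have hR : (0:ℝ) ≤ (ckn : ℝ) * Real.log q := by positivity
      linarith
    · have h1 : (t - ε) * ((n:ℝ) + 1) ≤ (ckn : ℝ) := by nlinarith
      calc (t - ε) * (n * Real.log q + Real.log 2)
          ≤ (t - ε) * (((n:ℝ) + 1) * Real.log q) := by
            apply mul_le_mul_of_nonneg_left _ hh.le
            nlinarith
        _ = ((t - ε) * ((n:ℝ) + 1)) * Real.log q := by ring
        _ ≤ (ckn : ℝ) * Real.log q := mul_le_mul_of_nonneg_right h1 hlq.le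
  have hfinal : t - ε ≤ gfun (Cyl q A f k) δn := by
    rw [gfun, hlogδ, le_div_iff₀ hden]
    calc (t - ε) * (n * Real.log q + Real.log 2)
        ≤ (ckn : ℝ) * Real.log q := harith
      _ ≤ Real.log (coveringNumber (Cyl q A f k) δn) := hnum
  exact hfinal

lemma ubdim_digitSet_le (hq : 2 ≤ q) (A : Set ℕ) {t : ℝ} (ht0 : 0 ≤ t)
    (F1 : ∀ ε > 0, ∀ᶠ n in atTop, ((A ∩ Set.Ico 0 n).ncard : ℝ) ≤ (t + ε) * n) :
    ubdim (digitSet q A) ≤ t := by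
  have hQ1 : (1:ℝ) < q := by exact_mod_cast hq
  have hr0 : (0:ℝ) < (q:ℝ)⁻¹ := by positivity
  have hr1 : (q:ℝ)⁻¹ < 1 := inv_lt_one_of_one_lt₀ hQ1
  have hlq : 0 < Real.log q := Real.log_pos hQ1
  rw [ubdim_eq]
  apply my_limsup_le (g_cobounded _)
  intro ε hε
  obtain ⟨N₀, hN₀⟩ := eventually_atTop.1 (F1 (ε/2) (half_pos hε))
  set n₂ : ℕ := max (max N₀ 1) (⌈(2*t+ε)/ε⌉₊ + 1) with hn₂
  have hmem : Ioo (0:ℝ) (((q:ℝ)⁻¹)^n₂) ∈ nhdsWithin (0:ℝ) (Set.Ioi 0) :=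
    Ioo_mem_nhdsGT_of_mem ⟨le_rfl, by positivity⟩
  filter_upwards [hmem] with δ hδm
  obtain ⟨hδ0, hδn₂⟩ := hδm
  have hexist : ∃ m : ℕ, ((q:ℝ)⁻¹)^(m+1) < δ := by
    have h := tendsto_pow_atTop_nhds_zero_of_lt_one hr0.le hr1
    obtain ⟨m, hm⟩ := (h.eventually_lt_const hδ0).exists
    exact ⟨m, lt_of_le_of_lt (pow_le_pow_of_le_one hr0.le hr1.le (Nat.le_succ m)) hm⟩
  set n := Nat.find hexist with hnn
  have hn1 : ((q:ℝ)⁻¹)^(n+1) < δ := Nat.find_spec hexist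
  have hn2 : δ ≤ ((q:ℝ)⁻¹)^n := by
    rcases Nat.eq_zero_or_pos n with h0 | h0
    · rw [h0, pow_zero]
      have : ((q:ℝ)⁻¹)^n₂ ≤ 1 := pow_le_one₀ hr0.le hr1.le
      linarith
    · have hmin := Nat.find_min hexist (m := n - 1) (by omega)
      push_neg at hmin
      have : n - 1 + 1 = n := by omega
      rwa [this] at hmin
  have hnn₂ : n₂ ≤ n := by
    by_contra hcon
    push_neg at hcon
    have h1 : ((q:ℝ)⁻¹)^n₂ ≤ ((q:ℝ)⁻¹)^(n+1) :=
      pow_le_pow_of_le_one hr0.le hr1.le (by omega)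
    linarith
  have hnN₀ : N₀ ≤ n + 1 := by
    have : N₀ ≤ n₂ := le_trans (le_max_left _ _) (le_max_left _ _)
    omega
  have hn_ge1 : 1 ≤ n := le_trans (le_trans (le_max_right _ _) (le_max_left _ _)) hnn₂
  have hnceil : (⌈(2*t+ε)/ε⌉₊ + 1 : ℕ) ≤ n := le_trans (le_max_right _ _) hnn₂
  have hnbig : (2*t+ε)/ε < (n:ℝ) := by
    have h1 : (2*t+ε)/ε ≤ (⌈(2*t+ε)/ε⌉₊ : ℝ) := Nat.le_ceil _
    have h2 : ((⌈(2*t+ε)/ε⌉₊ : ℕ) : ℝ) + 1 ≤ (n:ℝ) := by exact_mod_cast hnceil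
    linarith
  have hεn : 2*t + ε < ε * n := by
    rw [div_lt_iff₀ hε] at hnbig
    linarith
  -- covering bound
  set c : ℕ := (A ∩ Set.Ico 0 (n+1)).ncard with hc
  have hcov : coveringNumber (digitSet q A) δ ≤ q ^ c := by
    rw [digitSet_eq_cyl q A (fun _ => 0)]
    exact covN_cyl_le hq A (fun _ => 0) (fun m => lt_of_lt_of_le (by norm_num) hq) (fun m _ => rfl)
      (Nat.zero_le (n+1)) hn1
  have hcle : (c : ℝ) ≤ (t + ε/2) * ((n:ℝ) + 1) := by
    have := hN₀ (n+1) hnN₀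
    rw [← hc] at this
    convert this using 2
    push_cast
    ring
  have hdenlog : (n:ℝ) * Real.log q ≤ -Real.log δ := by
    have h1 : Real.log δ ≤ Real.log (((q:ℝ)⁻¹)^n) := Real.log_le_log hδ0 hn2
    rw [Real.log_pow, Real.log_inv] at h1
    linarith
  have hden0 : (0:ℝ) < (n:ℝ) * Real.log q := by
    have : (1:ℝ) ≤ (n:ℝ) := by exact_mod_cast hn_ge1
    nlinarith
  have hnum : Real.log (coveringNumber (digitSet q A) δ) ≤ (c:ℝ) * Real.log q := by
    have h1 := log_natCast_mono hcov
    rwa [Nat.cast_pow, Real.log_pow] at h1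
  have hnum0 : 0 ≤ Real.log (coveringNumber (digitSet q A) δ) := log_natCast_nonneg _
  have hL0 : 0 < -Real.log δ := lt_of_lt_of_le hden0 hdenlog
  rw [gfun, div_le_iff₀ hL0]
  calc Real.log (coveringNumber (digitSet q A) δ)
      ≤ (c:ℝ) * Real.log q := hnum
    _ ≤ ((t + ε/2) * ((n:ℝ) + 1)) * Real.log q :=
        mul_le_mul_of_nonneg_right hcle hlq.le
    _ ≤ (t + ε) * ((n:ℝ) * Real.log q) := by nlinarith
    _ ≤ (t + ε) * (-Real.log δ) := by
        apply mul_le_mul_of_nonneg_left hdenlog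
        linarith

end digits

theorem stmt16 (q : ℕ) (hq : 2 ≤ q) (A : Set ℕ) (t : ℝ)
    (ht : Filter.limsup (fun N : ℕ => ((A ∩ Set.Icc 0 N).ncard : ℝ) / N) Filter.atTop = t) :
    IsCompact (digitSet q A) ∧ digitSet q A ⊆ Set.Icc (0:ℝ) 1 ∧
      pdim (digitSet q A) = t ∧ ubdim (digitSet q A) = t := by
  have hQ1 : (1:ℝ) < q := by exact_mod_cast hq
  set d : ℕ → ℝ := fun N => ((A ∩ Set.Icc 0 N).ncard : ℝ) / N with hd
  have hdc : ∀ N : ℕ, (A ∩ Set.Ico 0 (N+1)) = (A ∩ Set.Icc 0 N) := by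
    intro N; ext x; simp [Set.mem_Ico, Set.mem_Icc, Nat.lt_succ_iff]
  have hcard_le : ∀ N : ℕ, (A ∩ Set.Icc 0 N).ncard ≤ N + 1 := by
    intro N
    have h1 : (A ∩ Set.Icc 0 N).ncard ≤ (Set.Icc (0:ℕ) N).ncard :=
      Set.ncard_le_ncard Set.inter_subset_right (Set.finite_Icc 0 N)
    have h2 : (Set.Icc (0:ℕ) N).ncard = N + 1 := by
      rw [← Finset.coe_Icc, Set.ncard_coe_finset, Nat.card_Icc]
      omega
    omega
  have hd2 : ∀ᶠ N in atTop, d N ≤ 2 := by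
    rw [eventually_atTop]
    refine ⟨1, fun N hN => ?_⟩
    rw [hd]
    have hNpos : (0:ℝ) < N := by exact_mod_cast hN
    rw [div_le_iff₀ hNpos]
    have h1 : ((A ∩ Set.Icc 0 N).ncard : ℝ) ≤ (N:ℝ) + 1 := by exact_mod_cast hcard_le N
    have h2 : (1:ℝ) ≤ (N:ℝ) := by exact_mod_cast hN
    linarith
  have hd0 : ∀ N, 0 ≤ d N := fun N => div_nonneg (Nat.cast_nonneg _) (Nat.cast_nonneg _)
  have hbddU : IsBoundedUnder (· ≤ ·) atTop d :=
    ⟨2, by simpa [Filter.eventually_map] using hd2⟩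
  have hcobU : IsCoboundedUnder (· ≤ ·) atTop d :=
    Filter.IsCoboundedUnder.of_frequently_ge ((Eventually.of_forall hd0).frequently)
  have ht0 : 0 ≤ t := by
    rw [← ht]
    exact Filter.le_limsup_of_frequently_le ((Eventually.of_forall hd0).frequently) hbddU
  have ht2 : t ≤ 2 := by
    rw [← ht]
    exact Filter.limsup_le_of_le hcobU hd2
  -- F1
  have F1 : ∀ ε > 0, ∀ᶠ n in atTop, ((A ∩ Set.Ico 0 n).ncard : ℝ) ≤ (t + ε) * n := by
    intro ε hε
    have hlt : Filter.limsup d atTop < t + ε := by rw [ht]; linarith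
    obtain ⟨N₀, hN₀⟩ := eventually_atTop.1 (Filter.eventually_lt_of_limsup_lt hlt hbddU)
    rw [eventually_atTop]
    refine ⟨N₀ + 2, fun n hn => ?_⟩
    set N := n - 1 with hN
    have hNn : n = N + 1 := by omega
    have hdN := hN₀ N (by omega)
    have hNpos : (0:ℝ) < N := by
      have : 1 ≤ N := by omega
      exact_mod_cast this
    rw [hd, div_lt_iff₀ hNpos] at hdN
    rw [hNn, hdc N]
    have hcast : ((n:ℕ):ℝ) = (N:ℝ) + 1 := by rw [hNn]; push_cast; ring
    calc ((A ∩ Set.Icc 0 N).ncard : ℝ) ≤ (t + ε) * N := hdN.le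
      _ ≤ (t + ε) * ((N:ℝ) + 1) := by nlinarith
      _ = (t + ε) * ((N+1 : ℕ):ℝ) := by push_cast; ring
  -- F2
  have F2 : ∀ ε > 0, ∃ᶠ n in atTop, (t - ε) * n ≤ ((A ∩ Set.Ico 0 n).ncard : ℝ) := by
    intro ε hε
    have hgt : t - ε/2 < Filter.limsup d atTop := by rw [ht]; linarith
    have hfr := Filter.frequently_lt_of_lt_limsup hcobU hgt
    have hfr2 := hfr.and_eventually (eventually_ge_atTop (⌈(4:ℝ)/ε⌉₊ + 1))
    apply (tendsto_add_atTop_nat 1).frequently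
    apply hfr2.mono
    rintro N ⟨h1, h2⟩
    have hNR : (4:ℝ)/ε < (N:ℝ) := by
      have ha : (4:ℝ)/ε ≤ (⌈(4:ℝ)/ε⌉₊ : ℝ) := Nat.le_ceil _
      have hb : ((⌈(4:ℝ)/ε⌉₊ : ℕ) : ℝ) + 1 ≤ (N:ℝ) := by exact_mod_cast h2
      linarith
    have hNpos : (0:ℝ) < N := lt_of_le_of_lt (by positivity) hNR
    rw [hd, lt_div_iff₀ hNpos] at h1
    have hεN : 4 < ε * N := by
      rw [div_lt_iff₀ hε] at hNR
      linarith
    rw [hdc N]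
    have hcast : (((N+1 : ℕ)):ℝ) = (N:ℝ) + 1 := by push_cast; ring
    rw [hcast]
    nlinarith
  -- main pieces
  have hcompact := isCompact_digitSet hq A
  have hsubIcc := digitSet_subset_Icc hq A
  have hFbdd : IsBounded (digitSet q A) := (isBounded_Icc (0:ℝ) 1).subset hsubIcc
  have hzlt : ∀ m : ℕ, (fun _ : ℕ => 0) m < q := fun m => lt_of_lt_of_le (by norm_num) hq
  have hzsupp : ∀ m : ℕ, m ∉ A → (fun _ : ℕ => 0) m = 0 := fun m _ => rfl
  have hub_le : ubdim (digitSet q A) ≤ t := ubdim_digitSet_le hq A ht0 F1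
  have hub_ge : t ≤ ubdim (digitSet q A) := by
    rw [digitSet_eq_cyl q A (fun _ => 0)]
    exact ubdim_cyl_ge hq A (fun _ => 0) hzlt hzsupp 0 ht2 F2
  have hub : ubdim (digitSet q A) = t := le_antisymm hub_le hub_ge
  have h0F : (0:ℝ) ∈ digitSet q A := by
    refine ⟨fun _ => 0, hzlt, hzsupp, ?_⟩
    simp
  set PS : Set ℝ := {a : ℝ | ∃ C : ℕ → Set ℝ, (digitSet q A ⊆ ⋃ i, C i) ∧
    (∀ i, IsBounded (C i)) ∧ ∀ i, ubdim (C i) ≤ a} with hPS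
  have hmemP : t ∈ PS := by
    refine ⟨fun i => if i = 0 then digitSet q A else ∅, ?_, ?_, ?_⟩
    · intro x hx
      exact mem_iUnion.2 ⟨0, by simp [hx]⟩
    · intro i
      by_cases h : i = 0
      · simp only [h, if_pos rfl]; exact hFbdd
      · simp only [if_neg h]; exact isBounded_empty
    · intro i
      by_cases h : i = 0
      · simp only [h, if_pos rfl]; exact hub.le
      · simp only [if_neg h]; rw [ubdim_empty]; exact ht0
  have hbddP : ∀ a ∈ PS, (0:ℝ) ≤ a := by
    rintro a ⟨C, hcov, hbd, hle⟩
    obtain ⟨i, hi⟩ := mem_iUnion.1 (hcov h0F)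
    exact le_trans (ubdim_nonneg (hbd i)) (hle i)
  have hple : pdim (digitSet q A) ≤ t := csInf_le ⟨0, fun a ha => hbddP a ha⟩ hmemP
  have hpge : t ≤ pdim (digitSet q A) := by
    apply le_csInf ⟨t, hmemP⟩
    rintro a ⟨C, hcov, hbd, hle⟩
    haveI : Nonempty ↥(digitSet q A) := ⟨⟨0, h0F⟩⟩
    haveI : CompleteSpace ↥(digitSet q A) := hcompact.isClosed.completeSpace_coe
    set D : ℕ → Set ↥(digitSet q A) := fun i => Subtype.val ⁻¹' closure (C i) with hD
    have hDc : ∀ i, IsClosed (D i) := fun i => isClosed_closure.preimage continuous_subtype_val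
    have hDu : ⋃ i, D i = Set.univ := by
      ext x
      simp only [mem_iUnion, mem_univ, iff_true]
      obtain ⟨i, hi⟩ := mem_iUnion.1 (hcov x.2)
      exact ⟨i, subset_closure hi⟩
    obtain ⟨i, hint⟩ := nonempty_interior_of_iUnion_of_closed hDc hDu
    obtain ⟨x, hx⟩ := hint
    obtain ⟨ε, hε, hball⟩ := Metric.mem_nhds_iff.1 (mem_interior_iff_mem_nhds.1 hx)
    obtain ⟨f, hf1, hf2, hfx⟩ := x.2
    have hkex : ∃ k : ℕ, 2*((q:ℝ)⁻¹)^k < ε := by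
      have hr0 : (0:ℝ) ≤ (q:ℝ)⁻¹ := by positivity
      have hr1 : (q:ℝ)⁻¹ < 1 := inv_lt_one_of_one_lt₀ hQ1
      have htend : Tendsto (fun k : ℕ => 2*((q:ℝ)⁻¹)^k) atTop (nhds 0) := by
        have h := tendsto_pow_atTop_nhds_zero_of_lt_one hr0 hr1
        simpa using h.const_mul 2
      exact (htend.eventually_lt_const hε).exists
    obtain ⟨k, hk⟩ := hkex
    have hcylsub : Cyl q A f k ⊆ closure (C i) := by
      intro y hy
      have hyF : y ∈ digitSet q A := cyl_subset_digitSet hy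
      have hyx : |y - (x:ℝ)| < ε := by
        obtain ⟨g, hg1, hg2, hg3, rfl⟩ := hy
        have hclose := phi_prefix_close hq hg1 hf1 hg3
        have hxPhi : (x:ℝ) = Phi q f := hfx
        rw [hxPhi]
        calc |Phi q g - Phi q f| ≤ 2 * ((q:ℝ)⁻¹)^k := hclose
          _ < ε := hk
      have hmem : (⟨y, hyF⟩ : ↥(digitSet q A)) ∈ ball x ε := by
        rw [mem_ball, Subtype.dist_eq, Real.dist_eq]
        exact hyx
      exact hball hmem
    have ht_le : t ≤ ubdim (Cyl q A f k) := ubdim_cyl_ge hq A f hf1 hf2 k ht2 F2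
    have h1 : ubdim (Cyl q A f k) ≤ ubdim (closure (C i)) :=
      ubdim_mono hcylsub (hbd i).closure
    have h2 : ubdim (closure (C i)) ≤ ubdim (C i) := ubdim_closure_le (hbd i)
    linarith [hle i]
  exact ⟨hcompact, hsubIcc, le_antisymm hple hpge, hub⟩
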